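/- Let (W,S) be a finite Coxeter system and let Γ be a connected W-digraph. Then the number of vertices of Γ is at most |W|. -/

import Mathlib

open Finsupp

set_option synthInstance.maxHeartbeats 1000000
set_option maxHeartbeats 1000000

noncomputable section

/-- The field `ℚ(u)` of rational functions. -/
abbrev Kq : Type := RatFunc ℚ

/-- The indeterminate `u`. -/
def uu : Kq := RatFunc.X

/-- An `S`-labeled digraph on vertex type `V` with labels in `B`:
`Edge a b s d` means there is an edge from `a` to `b` labeled `s`, which is
dashed if `d = true` and solid if `d = false`.  There are no loops, and every
vertex occurs in exactly one edge with any given label. -/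
structure SLabeledDigraph (V B : Type*) where
  Edge : V → V → B → Bool → Prop
  no_loop : ∀ v s d, ¬ Edge v v s d
  unique_edge : ∀ v s, ∃! e : V × V × Bool,
    (e.1 = v ∨ e.2.1 = v) ∧ Edge e.1 e.2.1 s e.2.2

namespace SLabeledDigraph

variable {V B : Type*} (Γ : SLabeledDigraph V B)

/-- Swap the endpoints of an edge datum. -/
def eswap {V : Type*} (e : V × V × Bool) : V × V × Bool := (e.2.1, e.1, e.2.2)

/-- The reversed digraph `Γ_rev`, with all edge directions reversed but types
and labels kept. -/
def rev : SLabeledDigraph V B where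
  Edge a b s d := Γ.Edge b a s d
  no_loop v s d := Γ.no_loop v s d
  unique_edge v s := by
    obtain ⟨e, ⟨hinc, hedge⟩, huniq⟩ := Γ.unique_edge v s
    refine ⟨eswap e, ⟨Or.symm hinc, hedge⟩, ?_⟩
    rintro e' ⟨hinc', hedge'⟩
    have h1 : eswap e' = e := huniq (eswap e') ⟨Or.symm hinc', hedge'⟩
    calc e' = eswap (eswap e') := rfl
    _ = eswap e := by rw [h1]

/-- The restriction `Γ_J`: same vertices, only edges with labels in `J`. -/
def restrict (J : Set B) : SLabeledDigraph V J where
  Edge a b s d := Γ.Edge a b s.1 d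
  no_loop v s d := Γ.no_loop v s.1 d
  unique_edge v s := Γ.unique_edge v s.1

/-- Directed adjacency (ignoring labels and edge types). -/
def DAdj (a b : V) : Prop := ∃ s d, Γ.Edge a b s d

/-- Undirected adjacency. -/
def UAdj (a b : V) : Prop := Γ.DAdj a b ∨ Γ.DAdj b a

/-- `Γ` is connected if any two vertices are joined by an undirected path. -/
def Connected : Prop := ∀ a b : V, Relation.ReflTransGen Γ.UAdj a b

/-- A source is a vertex at which no edge ends. -/
def IsSource (a : V) : Prop := ∀ b s d, ¬ Γ.Edge b a s d

/-- A sink is a vertex at which no edge begins. -/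
def IsSink (a : V) : Prop := ∀ b s d, ¬ Γ.Edge a b s d

/-- `Γ` is acyclic if it has no nonempty directed circuit. -/
def Acyclic : Prop := ∀ a : V, ¬ Relation.TransGen Γ.DAdj a a

/-- The setoid whose classes are the connected components of `Γ`. -/
def compSetoid : Setoid V :=
  ⟨Relation.ReflTransGen Γ.UAdj,
    ⟨fun _ => Relation.ReflTransGen.refl,
     fun h => by
       haveI : Std.Symm Γ.UAdj := ⟨fun _ _ hab => Or.symm hab⟩
       exact Std.Symm.symm _ _ h,
     fun h1 h2 => Relation.ReflTransGen.trans h1 h2⟩⟩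

end SLabeledDigraph

/-- The Hecke algebra of a Coxeter system over `ℚ(u)`: an associative
`ℚ(u)`-algebra `H` with basis `{T_w : w ∈ W}` such that `T_1 = 1` and
`T_s T_w = T_{sw}` if `ℓ(sw) > ℓ(w)`, while
`T_s T_w = u² T_{sw} + (u² - 1) T_w` if `ℓ(sw) < ℓ(w)`. -/
structure HeckeAlgebra {B W : Type*} [Group W] {M : CoxeterMatrix B}
    (cs : CoxeterSystem M W) (H : Type*) [Ring H] [Algebra Kq H] where
  T : W → H
  basis : Module.Basis W Kq H
  basis_eq : ∀ w, basis w = T w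
  T_one : T 1 = 1
  T_mul_of_lt : ∀ (i : B) (w : W), cs.length w < cs.length (cs.simple i * w) →
    T (cs.simple i) * T w = T (cs.simple i * w)
  T_mul_of_gt : ∀ (i : B) (w : W), cs.length (cs.simple i * w) < cs.length w →
    T (cs.simple i) * T w = (uu ^ 2) • T (cs.simple i * w) + (uu ^ 2 - 1) • T w

universe uV uW
variable {B : Type*} {W : Type uW} [Group W] {M : CoxeterMatrix B}
variable {H : Type*} [Ring H] [Algebra Kq H]

/-- `ρ` is the representation of `H` on `M(Γ)` (the `ℚ(u)`-vector space with
basis the vertices of `Γ`) in which each `T_s` acts by the operator `τ_s`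
determined by the edges of `Γ`. -/
def WDigraphRep {V : Type*} (cs : CoxeterSystem M W) (ha : HeckeAlgebra cs H)
    (Γ : SLabeledDigraph V B)
    (ρ : H →ₐ[Kq] Module.End Kq (V →₀ Kq)) : Prop :=
  ∀ (a b : V) (i : B),
    (Γ.Edge a b i false →
      ρ (ha.T (cs.simple i)) (single a (1 : Kq)) = single b (1 : Kq) ∧
      ρ (ha.T (cs.simple i)) (single b (1 : Kq))
        = (uu ^ 2 - 1) • single b (1 : Kq) + (uu ^ 2) • single a (1 : Kq)) ∧
    (Γ.Edge a b i true →
      ρ (ha.T (cs.simple i)) (single a (1 : Kq)) = uu • single a (1 : Kq) + (uu + 1) • single b (1 : Kq) ∧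
      ρ (ha.T (cs.simple i)) (single b (1 : Kq))
        = (uu ^ 2 - uu - 1) • single b (1 : Kq) + (uu ^ 2 - uu) • single a (1 : Kq))

/-- `Γ` is a `W`-digraph: the assignment `T_s ↦ τ_s` extends to a
representation of `H` on `M(Γ)`. -/
def IsWDigraph {V : Type*} (cs : CoxeterSystem M W) (ha : HeckeAlgebra cs H)
    (Γ : SLabeledDigraph V B) : Prop :=
  ∃ ρ : H →ₐ[Kq] Module.End Kq (V →₀ Kq), WDigraphRep cs ha Γ ρ


lemma uu_ne_zero : uu ≠ 0 := RatFunc.X_ne_zero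

lemma uu_add_one_ne_zero : uu + (1:Kq) ≠ 0 := by
  have : uu + (1:Kq) = algebraMap (Polynomial ℚ) Kq (Polynomial.X + 1) := by
    rw [map_add, map_one, RatFunc.algebraMap_X]; rfl
  rw [this]
  apply RatFunc.algebraMap_ne_zero
  intro h
  have := congrArg (Polynomial.eval 0) h
  simp at this

lemma uu_sq_ne_zero : uu ^ 2 ≠ (0:Kq) := pow_ne_zero 2 uu_ne_zero

lemma uu_sq_sub_uu_ne_zero : uu ^ 2 - uu ≠ (0:Kq) := by
  have h1 : uu - (1:Kq) ≠ 0 := by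
    have : uu - (1:Kq) = algebraMap (Polynomial ℚ) Kq (Polynomial.X - 1) := by
      rw [map_sub, map_one, RatFunc.algebraMap_X]; rfl
    rw [this]
    apply RatFunc.algebraMap_ne_zero
    intro h
    have := congrArg (Polynomial.eval 0) h
    simp at this
  have : uu ^ 2 - uu = uu * (uu - 1) := by ring
  rw [this]
  exact mul_ne_zero uu_ne_zero h1

/-- If `(W,S)` is finite and `Γ` is a connected `W`-digraph,
then the number of vertices of `Γ` is at most `|W|`. -/
theorem wdigraph_card_vertices_le_card_group {V : Type uV} [Finite W]
    (cs : CoxeterSystem M W) (ha : HeckeAlgebra cs H)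
    (Γ : SLabeledDigraph V B) (hconn : Γ.Connected) (hwd : IsWDigraph cs ha Γ) :
    Cardinal.lift.{uW} (Cardinal.mk V) ≤ Cardinal.lift.{uV} (Cardinal.mk W) := by
  obtain ⟨ρ, hrep⟩ := hwd
  rcases isEmpty_or_nonempty V with hV | hV
  · have : Cardinal.mk V = 0 := Cardinal.mk_eq_zero V
    simp [this]
  · obtain ⟨a₀⟩ := hV
    set x₀ : V →₀ Kq := single a₀ (1 : Kq) with hx₀def
    let φ : H →ₗ[Kq] (V →₀ Kq) := (LinearMap.applyₗ x₀).comp ρ.toLinearMap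
    have hφ : ∀ h : H, φ h = ρ h x₀ := fun h => rfl
    have hmul : ∀ x y : H, φ (x * y) = ρ x (φ y) := by
      intro x y
      rw [hφ, hφ, map_mul]
      rfl
    have key : ∀ a b : V, Γ.UAdj a b →
        single a (1 : Kq) ∈ LinearMap.range φ →
        single b (1 : Kq) ∈ LinearMap.range φ := by
      intro a b hadj hmem
      obtain ⟨h, hh⟩ := hmem
      have hTh : ∀ s : B, ρ (ha.T (cs.simple s)) (single a (1 : Kq)) ∈ LinearMap.range φ :=
        fun s => ⟨ha.T (cs.simple s) * h, by rw [hmul, hh]⟩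
      rcases hadj with ⟨s, d, hedge⟩ | ⟨s, d, hedge⟩
      · cases d with
        | false =>
            have hτ := ((hrep a b s).1 hedge).1
            exact hτ ▸ hTh s
        | true =>
            have hτ := ((hrep a b s).2 hedge).1
            have heq : single b (1 : Kq) = (uu + 1)⁻¹ •
                (ρ (ha.T (cs.simple s)) (single a (1 : Kq)) - uu • single a (1 : Kq)) := by
              rw [hτ, add_sub_cancel_left, smul_smul,
                inv_mul_cancel₀ uu_add_one_ne_zero, one_smul]
            rw [heq]
            exact Submodule.smul_mem _ _
              (Submodule.sub_mem _ (hTh s) (Submodule.smul_mem _ _ ⟨h, hh⟩))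
      · cases d with
        | false =>
            have hτ := ((hrep b a s).1 hedge).2
            have heq : single b (1 : Kq) = (uu ^ 2)⁻¹ •
                (ρ (ha.T (cs.simple s)) (single a (1 : Kq)) - (uu ^ 2 - 1) • single a (1 : Kq)) := by
              rw [hτ, add_sub_cancel_left, smul_smul,
                inv_mul_cancel₀ uu_sq_ne_zero, one_smul]
            rw [heq]
            exact Submodule.smul_mem _ _
              (Submodule.sub_mem _ (hTh s) (Submodule.smul_mem _ _ ⟨h, hh⟩))
        | true =>
            have hτ := ((hrep b a s).2 hedge).2
            have heq : single b (1 : Kq) = (uu ^ 2 - uu)⁻¹ •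
                (ρ (ha.T (cs.simple s)) (single a (1 : Kq))
                  - (uu ^ 2 - uu - 1) • single a (1 : Kq)) := by
              rw [hτ, add_sub_cancel_left, smul_smul,
                inv_mul_cancel₀ uu_sq_sub_uu_ne_zero, one_smul]
            rw [heq]
            exact Submodule.smul_mem _ _
              (Submodule.sub_mem _ (hTh s) (Submodule.smul_mem _ _ ⟨h, hh⟩))
    have hall : ∀ v : V, single v (1 : Kq) ∈ LinearMap.range φ := by
      intro v
      have h0 : single a₀ (1 : Kq) ∈ LinearMap.range φ :=
        ⟨1, by rw [hφ, map_one]; rfl⟩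
      induction hconn a₀ v with
      | refl => exact h0
      | tail _ hbc ih => exact key _ _ hbc ih
    have hsurj : Function.Surjective φ := by
      have htop : ∀ x : V →₀ Kq, x ∈ LinearMap.range φ := by
        intro x
        induction x using Finsupp.induction with
        | zero => exact Submodule.zero_mem _
        | single_add v c f _ _ ih =>
            refine Submodule.add_mem _ ?_ ih
            have : single v c = c • single v (1 : Kq) := by
              rw [Finsupp.smul_single, smul_eq_mul, mul_one]
            rw [this]
            exact Submodule.smul_mem _ _ (hall v)
      intro x
      exact htop x
    let ψ : (W →₀ Kq) →ₗ[Kq] (V →₀ Kq) :=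
      φ.comp (ha.basis.repr.symm : (W →₀ Kq) ≃ₗ[Kq] H).toLinearMap
    have hψ : Function.Surjective ψ := hsurj.comp ha.basis.repr.symm.surjective
    have hrank := LinearMap.lift_rank_le_of_surjective ψ hψ
    have hV' : Module.rank Kq (V →₀ Kq) = Cardinal.mk V := by
      simp [rank_finsupp_self]
    have hW' : Module.rank Kq (W →₀ Kq) = Cardinal.mk W := by
      simp [rank_finsupp_self]
    rwa [hV', hW'] at hrank
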